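/- Let Ψ : ℝ → ℝ be C¹ with Ψ'(ψ) > 0 for all ψ, and suppose Ψ(Ψ(Ψ(Ψ(ψ)))) = ψ + 2π for all ψ ∈ ℝ. Let M > 0 satisfy Ψ'(ψ) ≤ M for all ψ, and let δ ≥ 0 satisfy |Ψ(ψ + π) - Ψ(ψ) - π| ≤ δ for all ψ. Then |Ψ(Ψ(ψ)) - ψ - π| ≤ (1 + M)·δ for all ψ ∈ ℝ. -/

import Mathlib

open Real

/-- If `Ψ : ℝ → ℝ` is `C¹` with `0 < Ψ' ≤ M`, its fourth iterate is the translation by `2π`,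
and `|Ψ(ψ + π) - Ψ(ψ) - π| ≤ δ` for all `ψ`, then `|Ψ(Ψ(ψ)) - ψ - π| ≤ (1 + M)·δ`
for all `ψ`. -/
theorem stmt2 (Ψ : ℝ → ℝ) (hΨ : ContDiff ℝ 1 Ψ) (hpos : ∀ ψ, 0 < deriv Ψ ψ)
    (h4 : ∀ ψ, Ψ (Ψ (Ψ (Ψ ψ))) = ψ + 2 * π)
    (M : ℝ) (hM : 0 < M) (hMb : ∀ ψ, deriv Ψ ψ ≤ M)
    (δ : ℝ) (hδ : 0 ≤ δ) (hcomm : ∀ ψ, |Ψ (ψ + π) - Ψ ψ - π| ≤ δ) :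
    ∀ ψ, |Ψ (Ψ ψ) - ψ - π| ≤ (1 + M) * δ := by
  have hdiff : Differentiable ℝ Ψ := hΨ.differentiable one_ne_zero
  have hmono : StrictMono Ψ := strictMono_of_deriv_pos hpos
  set K := (1 + M) * δ with hK
  have hK0 : 0 ≤ K := mul_nonneg (by linarith) hδ
  -- Lipschitz bound
  have hlip : ∀ a b : ℝ, |Ψ a - Ψ b| ≤ M * |a - b| := by
    intro a b
    have hL : LipschitzWith M.toNNReal Ψ := by
      apply lipschitzWith_of_nnnorm_deriv_le hdiff
      intro x
      have := hMb x
      have := hpos x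
      rw [← NNReal.coe_le_coe]
      simp only [coe_nnnorm, Real.norm_eq_abs, Real.coe_toNNReal _ hM.le]
      rw [abs_of_pos (hpos x)]
      exact hMb x
    have := hL.dist_le_mul a b
    simpa [Real.dist_eq, Real.coe_toNNReal _ hM.le] using this
  -- g = Ψ ∘ Ψ nearly commutes with +π :
  have hg : ∀ ψ : ℝ, |Ψ (Ψ (ψ + π)) - Ψ (Ψ ψ) - π| ≤ K := by
    intro ψ
    have h1 : |Ψ (Ψ (ψ + π)) - Ψ (Ψ ψ + π)| ≤ M * δ := by
      calc |Ψ (Ψ (ψ + π)) - Ψ (Ψ ψ + π)| ≤ M * |Ψ (ψ + π) - (Ψ ψ + π)| := hlip _ _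
        _ ≤ M * δ := by
            apply mul_le_mul_of_nonneg_left _ hM.le
            have := hcomm ψ
            rw [show Ψ (ψ + π) - (Ψ ψ + π) = Ψ (ψ + π) - Ψ ψ - π by ring]
            exact this
    have h2 : |Ψ (Ψ ψ + π) - Ψ (Ψ ψ) - π| ≤ δ := hcomm (Ψ ψ)
    calc |Ψ (Ψ (ψ + π)) - Ψ (Ψ ψ) - π|
        = |(Ψ (Ψ (ψ + π)) - Ψ (Ψ ψ + π)) + (Ψ (Ψ ψ + π) - Ψ (Ψ ψ) - π)| := by ring_nf
      _ ≤ |Ψ (Ψ (ψ + π)) - Ψ (Ψ ψ + π)| + |Ψ (Ψ ψ + π) - Ψ (Ψ ψ) - π| := abs_add_le _ _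
      _ ≤ M * δ + δ := add_le_add h1 h2
      _ = K := by ring
  intro ψ
  have hgg : Ψ (Ψ (Ψ (Ψ ψ))) = ψ + 2 * π := h4 ψ
  rw [abs_le]
  constructor
  · -- lower bound
    rcases le_or_gt (ψ + π) (Ψ (Ψ ψ)) with h | h
    · linarith
    · have hm : Ψ (Ψ (Ψ (Ψ ψ))) < Ψ (Ψ (ψ + π)) := hmono (hmono h)
      have hb := (abs_le.mp (hg ψ)).2
      linarith
  · -- upper bound
    rcases le_or_gt (Ψ (Ψ ψ)) (ψ + π) with h | h
    · linarith
    · have hm : Ψ (Ψ (ψ + π)) < Ψ (Ψ (Ψ (Ψ ψ))) := hmono (hmono h)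
      have hb := (abs_le.mp (hg ψ)).1
      linarith
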